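/- arXiv:math/0612072 — 2 statements merged into one kernel-verified Lean document; each statement's English description precedes it below -/
import Mathlib

section
/- Let A, B, C be commutative rings that are ℚ-algebras, let g : A → B be an m-homomorphism and f : B → C an n-homomorphism. Then the composition f ∘ g : A → C is an nm-homomorphism. -/
open PowerSeries

noncomputable def logOneAdd {A : Type*} [CommRing A] [Algebra ℚ A] (a : A) : PowerSeries A :=
  PowerSeries.mk fun k => ((-1 : ℚ) ^ (k + 1) / k) • a ^ k

noncomputable def mapCoeff {A B : Type*} [CommRing A] [CommRing B] [Algebra ℚ A] [Algebra ℚ B]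
    (f : A →ₗ[ℚ] B) (p : PowerSeries A) : PowerSeries B :=
  PowerSeries.mk fun k => f (PowerSeries.coeff k p)

noncomputable def expPS {B : Type*} [CommRing B] [Algebra ℚ B] (p : PowerSeries B) : PowerSeries B :=
  PowerSeries.mk fun k => ∑ m ∈ Finset.range (k + 1),
    ((m.factorial : ℚ)⁻¹) • PowerSeries.coeff k (p ^ m)

noncomputable def charFun {A B : Type*} [CommRing A] [CommRing B] [Algebra ℚ A] [Algebra ℚ B]
    (f : A →ₗ[ℚ] B) (a : A) : PowerSeries B :=
  expPS (mapCoeff f (logOneAdd a))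

noncomputable def psi {A B : Type*} [CommRing A] [CommRing B] [Algebra ℚ A] [Algebra ℚ B]
    (f : A →ₗ[ℚ] B) (a : A) (k : ℕ) : B :=
  PowerSeries.coeff k (charFun f a)

def IsNHom {A B : Type*} [CommRing A] [CommRing B] [Algebra ℚ A] [Algebra ℚ B]
    (f : A →ₗ[ℚ] B) (n : ℕ) : Prop :=
  f 1 = n • (1 : B) ∧ ∀ k, n + 1 ≤ k → ∀ a : A, psi f a k = 0

noncomputable def frob {A B : Type*} [CommRing A] [CommRing B] [Algebra ℚ A] [Algebra ℚ B]
    (f : A →ₗ[ℚ] B) : (k : ℕ) → (Fin k → A) → B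
  | 0, _ => 1
  | k + 1, a =>
      f (a (Fin.last k)) * frob f k (fun i => a i.castSucc)
        - ∑ i : Fin k, frob f k
            (Function.update (fun j : Fin k => a j.castSucc) i (a i.castSucc * a (Fin.last k)))

section Aux
variable {A B C : Type*} [CommRing A] [CommRing B] [CommRing C]
  [Algebra ℚ A] [Algebra ℚ B] [Algebra ℚ C]

set_option linter.unusedSectionVars false

-- order lemma
theorem coeff_pow_eq_zero {p : PowerSeries B} (hp : PowerSeries.coeff 0 p = 0)
    {r j : ℕ} (h : j < r) : PowerSeries.coeff j (p ^ r) = 0 := by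
  induction r generalizing j with
  | zero => omega
  | succ r ih =>
    rw [pow_succ, PowerSeries.coeff_mul]
    apply Finset.sum_eq_zero
    rintro ⟨j1, j2⟩ hj
    rw [Finset.HasAntidiagonal.mem_antidiagonal] at hj
    rcases Nat.eq_zero_or_pos j2 with h0 | h0
    · simp only at h0 ⊢
      subst h0
      rw [hp, mul_zero]
    · have : j1 < r := by simp only at hj h0 ⊢; omega
      rw [ih this, zero_mul]
set_option linter.unusedSectionVars false

theorem coeff_expPS (p : PowerSeries B) (k : ℕ) :
    PowerSeries.coeff k (expPS p) = ∑ m ∈ Finset.range (k + 1),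
      ((m.factorial : ℚ)⁻¹) • PowerSeries.coeff k (p ^ m) := by
  simp [expPS]

theorem coeff_zero_expPS (p : PowerSeries B) : PowerSeries.coeff 0 (expPS p) = 1 := by
  simp [coeff_expPS]

/-- extend the range in expPS when `p` has zero constant coefficient -/
theorem coeff_expPS_ext {p : PowerSeries B} (hp : PowerSeries.coeff 0 p = 0)
    (k N : ℕ) (hN : k + 1 ≤ N) :
    PowerSeries.coeff k (expPS p) = ∑ m ∈ Finset.range N,
      ((m.factorial : ℚ)⁻¹) • PowerSeries.coeff k (p ^ m) := by
  rw [coeff_expPS]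
  apply Finset.sum_subset (Finset.range_subset_range.2 hN)
  intro m _ hm
  rw [Finset.mem_range, not_lt] at hm
  rw [coeff_pow_eq_zero hp (by omega), smul_zero]

theorem coeff_mapCoeff (f : A →ₗ[ℚ] B) (p : PowerSeries A) (k : ℕ) :
    PowerSeries.coeff k (mapCoeff f p) = f (PowerSeries.coeff k p) := by
  simp [mapCoeff]

noncomputable def mapCoeffL (f : A →ₗ[ℚ] B) : PowerSeries A →ₗ[ℚ] PowerSeries B where
  toFun := mapCoeff f
  map_add' p q := by ext k; simp [coeff_mapCoeff]
  map_smul' c p := by ext k; simp [coeff_mapCoeff]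

theorem mapCoeffL_apply (f : A →ₗ[ℚ] B) (p : PowerSeries A) :
    mapCoeffL f p = mapCoeff f p := rfl

/-- π-lemma : postcomposing with a ℚ-linear ring hom -/
theorem psi_ringHom_comp (π : B →+* C) (hπ : ∀ (c : ℚ) (x : B), π (c • x) = c • π x)
    (f : A →ₗ[ℚ] B) (h : A →ₗ[ℚ] C) (hh : ∀ x, h x = π (f x)) (a : A) (k : ℕ) :
    psi h a k = π (psi f a k) := by
  have key : mapCoeff h (logOneAdd a) = PowerSeries.map π (mapCoeff f (logOneAdd a)) := by
    ext j
    simp [coeff_mapCoeff, PowerSeries.coeff_map, hh]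
  have expkey : ∀ q : PowerSeries B,
      expPS (PowerSeries.map π q) = PowerSeries.map π (expPS q) := by
    intro q
    ext j
    rw [PowerSeries.coeff_map, coeff_expPS, coeff_expPS, map_sum]
    refine Finset.sum_congr rfl fun r _ => ?_
    rw [← map_pow, PowerSeries.coeff_map, hπ]
  simp only [psi, charFun, key, expkey, PowerSeries.coeff_map]

/-- φ-lemma : precomposing with a ℚ-linear ring hom -/
theorem psi_comp_ringHom (φ : A →+* B) (hφ : ∀ (c : ℚ) (x : A), φ (c • x) = c • φ x)
    (f : B →ₗ[ℚ] C) (h : A →ₗ[ℚ] C) (hh : ∀ x, h x = f (φ x)) (a : A) (k : ℕ) :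
    psi h a k = psi f (φ a) k := by
  have key : mapCoeff h (logOneAdd a) = mapCoeff f (logOneAdd (φ a)) := by
    ext j
    simp only [coeff_mapCoeff, logOneAdd, PowerSeries.coeff_mk, hh, hφ, map_pow]
  simp only [psi, charFun, key]

theorem deriv_pow_succ (L : PowerSeries B) (r : ℕ) :
    d⁄dX B (L ^ (r + 1)) = (r + 1 : ℕ) • (d⁄dX B L * L ^ r) := by
  rw [Derivation.leibniz_pow]
  simp only [Nat.add_sub_cancel, smul_eq_mul]
  rw [mul_comm]

theorem coeff_deriv_mul_pow {L : PowerSeries B} (r k : ℕ) :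
    PowerSeries.coeff k (d⁄dX B L * L ^ r) =
      ((r : ℚ) + 1)⁻¹ • PowerSeries.coeff k (d⁄dX B (L ^ (r + 1))) := by
  rw [deriv_pow_succ, map_nsmul, ← Nat.cast_smul_eq_nsmul ℚ, smul_smul]
  rw [show (((r : ℚ) + 1)⁻¹ * ((r + 1 : ℕ) : ℚ)) = 1 by push_cast; field_simp, one_smul]

theorem deriv_expPS {L : PowerSeries B} (hL : PowerSeries.coeff 0 L = 0) :
    d⁄dX B (expPS L) = d⁄dX B L * expPS L := by
  ext k
  rw [PowerSeries.coeff_derivative, PowerSeries.coeff_mul]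
  rw [coeff_expPS_ext hL (k + 1) (k + 2) (by omega)]
  -- expand RHS
  have rhs : ∀ p : ℕ × ℕ, p ∈ Finset.HasAntidiagonal.antidiagonal k →
      PowerSeries.coeff p.1 (d⁄dX B L) * PowerSeries.coeff p.2 (expPS L) =
      ∑ r ∈ Finset.range (k + 1), (r.factorial : ℚ)⁻¹ •
        (PowerSeries.coeff p.1 (d⁄dX B L) * PowerSeries.coeff p.2 (L ^ r)) := by
    rintro ⟨j1, j2⟩ hj
    rw [Finset.HasAntidiagonal.mem_antidiagonal] at hj
    rw [coeff_expPS_ext hL j2 (k + 1) (by simp at hj ⊢; omega), Finset.mul_sum]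
    refine Finset.sum_congr rfl fun r _ => ?_
    rw [mul_smul_comm]
  rw [Finset.sum_congr rfl rhs, Finset.sum_comm]
  have step : ∀ r ∈ Finset.range (k + 1),
      (∑ p ∈ Finset.HasAntidiagonal.antidiagonal k, (r.factorial : ℚ)⁻¹ •
        (PowerSeries.coeff p.1 (d⁄dX B L) * PowerSeries.coeff p.2 (L ^ r))) =
      ((r + 1).factorial : ℚ)⁻¹ • (PowerSeries.coeff (k + 1) (L ^ (r + 1)) * (k + 1)) := by
    intro r _
    rw [← Finset.smul_sum, ← PowerSeries.coeff_mul, coeff_deriv_mul_pow, smul_smul]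
    rw [PowerSeries.coeff_derivative]
    congr 1
    rw [Nat.factorial_succ]
    push_cast
    rw [mul_inv]
    ring
  rw [Finset.sum_congr rfl step]
  -- LHS: reindex
  rw [Finset.sum_range_succ' (fun m => (m.factorial : ℚ)⁻¹ • PowerSeries.coeff (k + 1) (L ^ m)) (k + 1)]
  simp only [pow_zero, PowerSeries.coeff_one, Nat.factorial_zero]
  rw [if_neg (by omega : ¬ (k + 1 = 0))]
  simp only [smul_zero, add_zero]
  rw [Finset.sum_mul]
  refine Finset.sum_congr rfl fun r _ => ?_
  rw [smul_mul_assoc]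

noncomputable def logPS (b : PowerSeries B) : PowerSeries B :=
  PowerSeries.mk fun j => ∑ k ∈ Finset.range (j + 1),
    ((-1 : ℚ) ^ (k + 1) / k) • PowerSeries.coeff j (b ^ k)

theorem coeff_logPS (b : PowerSeries B) (j : ℕ) :
    PowerSeries.coeff j (logPS b) = ∑ k ∈ Finset.range (j + 1),
      ((-1 : ℚ) ^ (k + 1) / k) • PowerSeries.coeff j (b ^ k) := by
  simp [logPS]

theorem coeff_logPS_ext {b : PowerSeries B} (hb : PowerSeries.coeff 0 b = 0)
    (j N : ℕ) (hN : j + 1 ≤ N) :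
    PowerSeries.coeff j (logPS b) = ∑ k ∈ Finset.range N,
      ((-1 : ℚ) ^ (k + 1) / k) • PowerSeries.coeff j (b ^ k) := by
  rw [coeff_logPS]
  apply Finset.sum_subset (Finset.range_subset_range.2 hN)
  intro m _ hm
  rw [Finset.mem_range, not_lt] at hm
  rw [coeff_pow_eq_zero hb (by omega), smul_zero]

theorem coeff_zero_logPS {b : PowerSeries B} :
    PowerSeries.coeff 0 (logPS b) = 0 := by
  rw [coeff_logPS]
  simp

noncomputable def geomAlt (b : PowerSeries B) : PowerSeries B :=
  PowerSeries.mk fun j => ∑ k ∈ Finset.range (j + 1),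
    ((-1 : ℚ) ^ k) • PowerSeries.coeff j (b ^ k)

theorem coeff_geomAlt_ext {b : PowerSeries B} (hb : PowerSeries.coeff 0 b = 0)
    (j N : ℕ) (hN : j + 1 ≤ N) :
    PowerSeries.coeff j (geomAlt b) = ∑ k ∈ Finset.range N,
      ((-1 : ℚ) ^ k) • PowerSeries.coeff j (b ^ k) := by
  rw [geomAlt, PowerSeries.coeff_mk]
  apply Finset.sum_subset (Finset.range_subset_range.2 hN)
  intro m _ hm
  rw [Finset.mem_range, not_lt] at hm
  rw [coeff_pow_eq_zero hb (by omega), smul_zero]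

theorem one_add_mul_geomAlt {b : PowerSeries B} (hb : PowerSeries.coeff 0 b = 0) :
    (1 + b) * geomAlt b = 1 := by
  ext j
  rw [add_mul, one_mul, map_add, PowerSeries.coeff_mul]
  have h1 : PowerSeries.coeff j (geomAlt b) = ∑ k ∈ Finset.range (j + 1),
      ((-1 : ℚ) ^ k) • PowerSeries.coeff j (b ^ k) := coeff_geomAlt_ext hb j (j+1) le_rfl
  have h2 : ∀ p : ℕ × ℕ, p ∈ Finset.HasAntidiagonal.antidiagonal j →
      PowerSeries.coeff p.1 b * PowerSeries.coeff p.2 (geomAlt b) =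
      ∑ k ∈ Finset.range (j + 1), ((-1 : ℚ) ^ k) •
        (PowerSeries.coeff p.1 b * PowerSeries.coeff p.2 (b ^ k)) := by
    rintro ⟨j1, j2⟩ hj
    rw [Finset.HasAntidiagonal.mem_antidiagonal] at hj
    rw [coeff_geomAlt_ext hb j2 (j + 1) (by simp at hj ⊢; omega), Finset.mul_sum]
    exact Finset.sum_congr rfl fun k _ => (mul_smul_comm _ _ _)
  rw [h1, Finset.sum_congr rfl h2, Finset.sum_comm]
  have h3 : ∀ k ∈ Finset.range (j + 1),
      (∑ p ∈ Finset.HasAntidiagonal.antidiagonal j, ((-1 : ℚ) ^ k) •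
        (PowerSeries.coeff p.1 b * PowerSeries.coeff p.2 (b ^ k))) =
      ((-1 : ℚ) ^ k) • PowerSeries.coeff j (b ^ (k + 1)) := by
    intro k _
    rw [← Finset.smul_sum]
    congr 1
    rw [pow_succ, mul_comm (b ^ k) b, PowerSeries.coeff_mul]
  rw [Finset.sum_congr rfl h3]
  -- telescoping
  have tel : ∀ k, ((-1 : ℚ) ^ k) • PowerSeries.coeff j (b ^ k) +
      ((-1 : ℚ) ^ k) • PowerSeries.coeff j (b ^ (k + 1)) =
      (fun i => ((-1 : ℚ) ^ i) • PowerSeries.coeff j (b ^ i)) k -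
      (fun i => ((-1 : ℚ) ^ i) • PowerSeries.coeff j (b ^ i)) (k + 1) := by
    intro k
    simp only [pow_succ]
    rw [sub_eq_add_neg]
    congr 1
    rw [← neg_smul]
    congr 1
    ring
  rw [← Finset.sum_add_distrib, Finset.sum_congr rfl (fun k _ => tel k), Finset.sum_range_sub']
  simp only [pow_zero, one_smul]
  rw [coeff_pow_eq_zero hb (by omega : j < j + 1), smul_zero, sub_zero]

theorem deriv_logPS {b : PowerSeries B} (hb : PowerSeries.coeff 0 b = 0) :
    d⁄dX B (logPS b) = d⁄dX B b * geomAlt b := by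
  ext k
  rw [PowerSeries.coeff_derivative, PowerSeries.coeff_mul]
  rw [coeff_logPS_ext hb (k + 1) (k + 2) (by omega)]
  have rhs : ∀ p : ℕ × ℕ, p ∈ Finset.HasAntidiagonal.antidiagonal k →
      PowerSeries.coeff p.1 (d⁄dX B b) * PowerSeries.coeff p.2 (geomAlt b) =
      ∑ r ∈ Finset.range (k + 1), ((-1 : ℚ) ^ r) •
        (PowerSeries.coeff p.1 (d⁄dX B b) * PowerSeries.coeff p.2 (b ^ r)) := by
    rintro ⟨j1, j2⟩ hj
    rw [Finset.HasAntidiagonal.mem_antidiagonal] at hj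
    rw [coeff_geomAlt_ext hb j2 (k + 1) (by simp at hj ⊢; omega), Finset.mul_sum]
    exact Finset.sum_congr rfl fun r _ => (mul_smul_comm _ _ _)
  rw [Finset.sum_congr rfl rhs, Finset.sum_comm]
  have step : ∀ r ∈ Finset.range (k + 1),
      (∑ p ∈ Finset.HasAntidiagonal.antidiagonal k, ((-1 : ℚ) ^ r) •
        (PowerSeries.coeff p.1 (d⁄dX B b) * PowerSeries.coeff p.2 (b ^ r))) =
      ((-1 : ℚ) ^ (r + 1 + 1) / (r + 1)) • (PowerSeries.coeff (k + 1) (b ^ (r + 1)) * (k + 1)) := by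
    intro r _
    rw [← Finset.smul_sum, ← PowerSeries.coeff_mul, coeff_deriv_mul_pow, smul_smul]
    rw [PowerSeries.coeff_derivative]
    congr 1
    push_cast
    rw [pow_succ, pow_succ]
    field_simp
  rw [Finset.sum_congr rfl step]
  rw [Finset.sum_range_succ' (fun m => ((-1 : ℚ) ^ (m + 1) / m) • PowerSeries.coeff (k + 1) (b ^ m)) (k + 1)]
  simp only [Nat.cast_zero, div_zero, zero_smul, add_zero]
  rw [Finset.sum_mul]
  refine Finset.sum_congr rfl fun r _ => ?_
  rw [smul_mul_assoc]
  push_cast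
  ring_nf

theorem eq_of_deriv_eq {p q : PowerSeries B} (h : d⁄dX B p = d⁄dX B q)
    (h0 : PowerSeries.coeff 0 p = PowerSeries.coeff 0 q) : p = q := by
  ext j
  cases j with
  | zero => exact h0
  | succ j =>
    have hc : PowerSeries.coeff j (d⁄dX B p) = PowerSeries.coeff j (d⁄dX B q) := by rw [h]
    rw [PowerSeries.coeff_derivative, PowerSeries.coeff_derivative] at hc
    have key : ∀ x : B, x * ((j : B) + 1) = ((j : ℚ) + 1) • x := by
      intro x
      rw [Algebra.smul_def]
      push_cast
      exact mul_comm _ _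
    rw [key, key] at hc
    have := congrArg (fun x => ((j : ℚ) + 1)⁻¹ • x) hc
    simpa [smul_smul, inv_mul_cancel₀ (by positivity : (j : ℚ) + 1 ≠ 0)] using this

theorem logPS_expPS {L : PowerSeries B} (hL : PowerSeries.coeff 0 L = 0) :
    logPS (expPS L - 1) = L := by
  set b := expPS L - 1 with hbdef
  have hb : PowerSeries.coeff 0 b = 0 := by
    rw [hbdef, map_sub, coeff_zero_expPS, PowerSeries.coeff_zero_one, sub_self]
  have hexp : expPS L = 1 + b := by rw [hbdef]; ring
  have h1 : d⁄dX B b = d⁄dX B L * (1 + b) := by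
    rw [hbdef, map_sub, Derivation.map_one_eq_zero, sub_zero]
    rw [deriv_expPS hL, hexp]
    ring
  have h2 : d⁄dX B (logPS b) = d⁄dX B L := by
    rw [deriv_logPS hb, h1, mul_assoc, one_add_mul_geomAlt hb, mul_one]
  exact eq_of_deriv_eq h2 (by rw [coeff_zero_logPS, hL])

/-! ### Degree bounds (B2) -/

def DegW (m : ℕ) (u : PowerSeries (PowerSeries C)) : Prop :=
  ∀ k j, k * m < j → PowerSeries.coeff j (PowerSeries.coeff k u) = 0

theorem DegW.one {m : ℕ} : DegW m (1 : PowerSeries (PowerSeries C)) := by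
  intro k j hj
  rcases Nat.eq_zero_or_pos k with rfl | hk
  · rw [PowerSeries.coeff_zero_eq_constantCoeff, map_one]
    rw [PowerSeries.coeff_one, if_neg (by omega)]
  · rw [PowerSeries.coeff_one, if_neg (by omega), map_zero]

theorem DegW.mul {m : ℕ} {u v : PowerSeries (PowerSeries C)}
    (hu : DegW m u) (hv : DegW m v) : DegW m (u * v) := by
  intro k j hj
  rw [PowerSeries.coeff_mul, map_sum]
  apply Finset.sum_eq_zero
  rintro ⟨k1, k2⟩ hk
  rw [Finset.HasAntidiagonal.mem_antidiagonal] at hk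
  rw [PowerSeries.coeff_mul]
  apply Finset.sum_eq_zero
  rintro ⟨p1, p2⟩ hp
  rw [Finset.HasAntidiagonal.mem_antidiagonal] at hp
  simp only at hk hp ⊢
  have hmul : k * m = k1 * m + k2 * m := by rw [← hk, Nat.add_mul]
  by_cases h1 : k1 * m < p1
  · rw [hu k1 p1 h1, zero_mul]
  · rw [hv k2 p2 (by omega), mul_zero]

theorem DegW.pow {m : ℕ} {u : PowerSeries (PowerSeries C)}
    (hu : DegW m u) (r : ℕ) : DegW m (u ^ r) := by
  induction r with
  | zero => simpa using DegW.one
  | succ r ih => rw [pow_succ]; exact ih.mul hu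

theorem DegW.expPS {m : ℕ} {u : PowerSeries (PowerSeries C)}
    (hu : DegW m u) : DegW m (expPS u) := by
  intro k j hj
  rw [coeff_expPS, map_sum]
  apply Finset.sum_eq_zero
  intro r _
  rw [PowerSeries.coeff_smul, hu.pow r k j hj, smul_zero]

theorem coeff_pow_deg {b : PowerSeries B} {m : ℕ}
    (hb : ∀ i, m < i → PowerSeries.coeff i b = 0) :
    ∀ k j, k * m < j → PowerSeries.coeff j (b ^ k) = 0 := by
  intro k
  induction k with
  | zero =>
    intro j hj
    rw [pow_zero, PowerSeries.coeff_one, if_neg (by omega)]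
  | succ k ih =>
    intro j hj
    rw [pow_succ, PowerSeries.coeff_mul]
    apply Finset.sum_eq_zero
    rintro ⟨p1, p2⟩ hp
    rw [Finset.HasAntidiagonal.mem_antidiagonal] at hp
    simp only at hp ⊢
    have hmul : (k + 1) * m = k * m + m := by rw [Nat.add_mul, one_mul]
    by_cases h1 : k * m < p1
    · rw [ih p1 h1, zero_mul]
    · rw [hb p2 (by omega), mul_zero]

theorem psi_deg_bound (f : B →ₗ[ℚ] C) {b : PowerSeries B} {m : ℕ}
    (hb : ∀ i, m < i → PowerSeries.coeff i b = 0) (k j : ℕ) (hj : k * m < j) :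
    PowerSeries.coeff j (psi (mapCoeffL f) b k) = 0 := by
  have hdeg : DegW m (mapCoeff (mapCoeffL f) (logOneAdd b)) := by
    intro k' j' hj'
    rw [coeff_mapCoeff, mapCoeffL_apply]
    rw [logOneAdd, PowerSeries.coeff_mk, coeff_mapCoeff, PowerSeries.coeff_smul, map_smul]
    rw [coeff_pow_deg hb k' j' hj', map_zero, smul_zero]
  exact hdeg.expPS k j hj

/-! ### Diagonal summation (B3) -/

def OrdV (u : PowerSeries (PowerSeries C)) : Prop :=
  ∀ k j, j < k → PowerSeries.coeff j (PowerSeries.coeff k u) = 0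

theorem OrdV.one : OrdV (1 : PowerSeries (PowerSeries C)) := by
  intro k j hj
  rw [PowerSeries.coeff_one, if_neg (by omega), map_zero]

theorem OrdV.mul {u v : PowerSeries (PowerSeries C)}
    (hu : OrdV u) (hv : OrdV v) : OrdV (u * v) := by
  intro k j hj
  rw [PowerSeries.coeff_mul, map_sum]
  apply Finset.sum_eq_zero
  rintro ⟨k1, k2⟩ hk
  rw [Finset.HasAntidiagonal.mem_antidiagonal] at hk
  rw [PowerSeries.coeff_mul]
  apply Finset.sum_eq_zero
  rintro ⟨j1, j2⟩ hp
  rw [Finset.HasAntidiagonal.mem_antidiagonal] at hp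
  simp only at hk hp ⊢
  by_cases h1 : j1 < k1
  · rw [hu k1 j1 h1, zero_mul]
  · rw [hv k2 j2 (by omega), mul_zero]

theorem OrdV.pow {u : PowerSeries (PowerSeries C)} (hu : OrdV u) (r : ℕ) : OrdV (u ^ r) := by
  induction r with
  | zero => simpa using OrdV.one
  | succ r ih => rw [pow_succ]; exact ih.mul hu

noncomputable def diagSum (u : PowerSeries (PowerSeries C)) : PowerSeries C :=
  PowerSeries.mk fun j => ∑ k ∈ Finset.range (j + 1),
    PowerSeries.coeff j (PowerSeries.coeff k u)

theorem coeff_diagSum (u : PowerSeries (PowerSeries C)) (j : ℕ) :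
    PowerSeries.coeff j (diagSum u) = ∑ k ∈ Finset.range (j + 1),
      PowerSeries.coeff j (PowerSeries.coeff k u) := by
  simp [diagSum]

theorem diagSum_one : diagSum (1 : PowerSeries (PowerSeries C)) = 1 := by
  ext j
  rw [coeff_diagSum]
  rcases Nat.eq_zero_or_pos j with rfl | hj
  · simp
  · rw [PowerSeries.coeff_one, if_neg (by omega)]
    apply Finset.sum_eq_zero
    intro k hk
    rcases Nat.eq_zero_or_pos k with rfl | hk0
    · rw [PowerSeries.coeff_zero_eq_constantCoeff, map_one, PowerSeries.coeff_one, if_neg (by omega)]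
    · rw [PowerSeries.coeff_one, if_neg (by omega), map_zero]

theorem diagSum_mul {u v : PowerSeries (PowerSeries C)} (hu : OrdV u) (hv : OrdV v) :
    diagSum (u * v) = diagSum u * diagSum v := by
  ext j
  rw [coeff_diagSum, PowerSeries.coeff_mul]
  set g : ℕ × ℕ → C := fun p => ∑ q ∈ Finset.HasAntidiagonal.antidiagonal j,
    PowerSeries.coeff q.1 (PowerSeries.coeff p.1 u) *
    PowerSeries.coeff q.2 (PowerSeries.coeff p.2 v) with hg
  have gzero : ∀ p : ℕ × ℕ, j < p.1 + p.2 → g p = 0 := by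
    rintro ⟨k1, k2⟩ hp
    apply Finset.sum_eq_zero
    rintro ⟨j1, j2⟩ hq
    rw [Finset.HasAntidiagonal.mem_antidiagonal] at hq
    simp only at hq ⊢
    by_cases h1 : j1 < k1
    · rw [hu k1 j1 h1, zero_mul]
    · rw [hv k2 j2 (by omega), mul_zero]
  have lhs : ∀ k ∈ Finset.range (j + 1),
      PowerSeries.coeff j (PowerSeries.coeff k (u * v)) =
      ∑ p ∈ Finset.range (j + 1) ×ˢ Finset.range (j + 1),
        if p.1 + p.2 = k then g p else 0 := by
    intro k hk
    rw [Finset.mem_range] at hk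
    rw [PowerSeries.coeff_mul, map_sum]
    have e1 : ∀ x ∈ Finset.HasAntidiagonal.antidiagonal k,
        PowerSeries.coeff j ((PowerSeries.coeff x.1 u) *
          (PowerSeries.coeff x.2 v)) = g x := by
      intro x _
      rw [PowerSeries.coeff_mul, hg]
    rw [Finset.sum_congr rfl e1, ← Finset.sum_filter]
    congr 1
    ext p
    simp only [Finset.HasAntidiagonal.mem_antidiagonal, Finset.mem_filter, Finset.mem_product, Finset.mem_range]
    omega
  rw [Finset.sum_congr rfl lhs, Finset.sum_comm]
  have collapse : ∀ p ∈ Finset.range (j + 1) ×ˢ Finset.range (j + 1),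
      (∑ k ∈ Finset.range (j + 1), if p.1 + p.2 = k then g p else 0) = g p := by
    intro p hp
    rw [Finset.sum_ite_eq (Finset.range (j + 1)) (p.1 + p.2) (fun _ => g p)]
    by_cases h : p.1 + p.2 ∈ Finset.range (j + 1)
    · rw [if_pos h]
    · rw [if_neg h, gzero p (by simpa using h)]
  rw [Finset.sum_congr rfl collapse]
  -- now RHS side
  have rhs : ∀ q ∈ Finset.HasAntidiagonal.antidiagonal j,
      PowerSeries.coeff q.1 (diagSum u) * PowerSeries.coeff q.2 (diagSum v) =
      ∑ p ∈ Finset.range (j + 1) ×ˢ Finset.range (j + 1),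
        PowerSeries.coeff q.1 (PowerSeries.coeff p.1 u) *
        PowerSeries.coeff q.2 (PowerSeries.coeff p.2 v) := by
    rintro ⟨j1, j2⟩ hq
    rw [Finset.HasAntidiagonal.mem_antidiagonal] at hq
    rw [coeff_diagSum, coeff_diagSum, Finset.sum_mul_sum]
    rw [← Finset.sum_product']
    simp only
    -- extend ranges: sum over range (j1+1) ×ˢ range (j2+1) vs range (j+1) ×ˢ range (j+1)
    apply Finset.sum_subset
    · intro p hp
      simp only [Finset.mem_product, Finset.mem_range] at hp ⊢
      omega
    · rintro ⟨k1, k2⟩ hp hnp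
      simp only [Finset.mem_product, Finset.mem_range] at hp hnp
      simp only
      by_cases h1 : j1 < k1
      · rw [hu k1 j1 h1, zero_mul]
      · rw [hv k2 j2 (by omega), mul_zero]
  rw [Finset.sum_congr rfl rhs, Finset.sum_comm]

theorem diagSum_pow {u : PowerSeries (PowerSeries C)} (hu : OrdV u) (r : ℕ) :
    diagSum (u ^ r) = (diagSum u) ^ r := by
  induction r with
  | zero => rw [pow_zero, pow_zero, diagSum_one]
  | succ r ih => rw [pow_succ, pow_succ, diagSum_mul (hu.pow r) hu, ih]

theorem gather (f : B →ₗ[ℚ] C) {b : PowerSeries B} (hb : PowerSeries.coeff 0 b = 0) (j : ℕ) :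
    PowerSeries.coeff j (expPS (mapCoeff f (logPS b))) =
    ∑ k ∈ Finset.range (j + 1), PowerSeries.coeff j (psi (mapCoeffL f) b k) := by
  set u := mapCoeff (mapCoeffL f) (logOneAdd b) with hu_def
  have hcu : ∀ k, PowerSeries.coeff k u =
      ((-1 : ℚ) ^ (k + 1) / k) • mapCoeff f (b ^ k) := by
    intro k
    rw [hu_def, coeff_mapCoeff, logOneAdd, PowerSeries.coeff_mk, mapCoeffL_apply]
    ext j'
    rw [PowerSeries.coeff_smul, coeff_mapCoeff, PowerSeries.coeff_smul, coeff_mapCoeff, map_smul]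
  have hOrd : OrdV u := by
    intro k j' hj'
    rw [hcu k, PowerSeries.coeff_smul, coeff_mapCoeff, coeff_pow_eq_zero hb hj', map_zero, smul_zero]
  have hu0 : PowerSeries.coeff 0 u = 0 := by
    rw [hcu 0]
    simp
  have hdiag : diagSum u = mapCoeff f (logPS b) := by
    ext j'
    rw [coeff_diagSum, coeff_mapCoeff, coeff_logPS, map_sum]
    refine Finset.sum_congr rfl fun k _ => ?_
    rw [hcu k, PowerSeries.coeff_smul, coeff_mapCoeff, map_smul]
  rw [coeff_expPS]
  have lhs : ∀ r ∈ Finset.range (j + 1),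
      ((r.factorial : ℚ)⁻¹) • PowerSeries.coeff j ((mapCoeff f (logPS b)) ^ r) =
      ∑ k ∈ Finset.range (j + 1), ((r.factorial : ℚ)⁻¹) •
        PowerSeries.coeff j (PowerSeries.coeff k (u ^ r)) := by
    intro r _
    rw [← hdiag, ← diagSum_pow hOrd r, coeff_diagSum, Finset.smul_sum]
  rw [Finset.sum_congr rfl lhs, Finset.sum_comm]
  refine Finset.sum_congr rfl fun k hk => ?_
  rw [Finset.mem_range] at hk
  rw [psi, charFun, coeff_expPS]
  rw [map_sum]
  have ext1 : ∀ r ∈ Finset.range (k + 1),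
      PowerSeries.coeff j (((r.factorial : ℚ)⁻¹) •
        PowerSeries.coeff k (u ^ r)) =
      ((r.factorial : ℚ)⁻¹) • PowerSeries.coeff j (PowerSeries.coeff k (u ^ r)) := by
    intro r _
    rw [PowerSeries.coeff_smul]
  rw [Finset.sum_congr rfl ext1]
  symm
  apply Finset.sum_subset (Finset.range_subset_range.2 (by omega : k + 1 ≤ j + 1))
  intro r _ hr
  rw [Finset.mem_range, not_lt] at hr
  rw [coeff_pow_eq_zero hu0 (by omega : k < r), map_zero, smul_zero]

/-! ### Polynomial coefficientwise maps (B1) -/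

noncomputable def polyMapCoeff (h : B →ₗ[ℚ] C) : Polynomial B →ₗ[ℚ] Polynomial C where
  toFun p := ⟨AddMonoidAlgebra.ofCoeff (Finsupp.mapRange h (map_zero h) p.toFinsupp.coeff)⟩
  map_add' p q := by
    apply Polynomial.ext
    intro j
    simp only [Polynomial.coeff_add, Polynomial.coeff_ofFinsupp, Finsupp.mapRange_apply]
    rw [Polynomial.toFinsupp_add, AddMonoidAlgebra.coeff_add, Finsupp.add_apply, map_add]
  map_smul' c p := by
    apply Polynomial.ext
    intro j
    simp only [RingHom.id_apply, Polynomial.coeff_smul, Polynomial.coeff_ofFinsupp,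
      Finsupp.mapRange_apply]
    rw [Polynomial.toFinsupp_smul, AddMonoidAlgebra.coeff_smul, Finsupp.smul_apply, map_smul]

theorem coeff_polyMapCoeff (h : B →ₗ[ℚ] C) (p : Polynomial B) (j : ℕ) :
    (polyMapCoeff h p).coeff j = h (p.coeff j) := by
  simp [polyMapCoeff, Polynomial.coeff, Finsupp.mapRange_apply]

theorem aeval_polyMapCoeff (h : B →ₗ[ℚ] C) (p : Polynomial B) (t : ℚ) :
    Polynomial.aeval (algebraMap ℚ C t) (polyMapCoeff h p) =
      h (Polynomial.aeval (algebraMap ℚ B t) p) := by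
  set N := max p.natDegree (polyMapCoeff h p).natDegree + 1 with hN
  rw [Polynomial.aeval_eq_sum_range' (by omega : (polyMapCoeff h p).natDegree < N),
      Polynomial.aeval_eq_sum_range' (by omega : p.natDegree < N), map_sum]
  refine Finset.sum_congr rfl fun i _ => ?_
  rw [coeff_polyMapCoeff, smul_eq_mul, smul_eq_mul, mul_comm, mul_comm (p.coeff i),
    ← map_pow, ← map_pow, ← Algebra.smul_def, ← Algebra.smul_def, map_smul]

theorem ratSmul_ringHom {R S : Type*} [CommRing R] [CommRing S] [Algebra ℚ R] [Algebra ℚ S]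
    (π : R →+* S) (c : ℚ) (x : R) : π (c • x) = c • π x := by
  rw [Algebra.smul_def, map_mul, Algebra.smul_def]
  congr 1
  exact RingHom.congr_fun (Subsingleton.elim (π.comp (algebraMap ℚ R)) (algebraMap ℚ S)) c

theorem poly_zero_of_aeval_rat_zero (q : Polynomial C)
    (hq : ∀ t : ℚ, Polynomial.aeval (algebraMap ℚ C t) q = 0) : q = 0 := by
  classical
  let bb := Module.Basis.ofVectorSpace ℚ C
  apply Polynomial.ext
  intro j
  rw [Polynomial.coeff_zero, ← bb.forall_coord_eq_zero_iff]
  intro i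
  have h1 : ∀ t : ℚ, Polynomial.eval t (polyMapCoeff (bb.coord i) q) = 0 := by
    intro t
    have h2 := aeval_polyMapCoeff (bb.coord i) q t
    rw [hq t, map_zero] at h2
    rw [← h2, show (algebraMap ℚ ℚ) t = t from Algebra.algebraMap_self_apply t,
      ← Polynomial.coe_aeval_eq_eval]
  have h3 := Polynomial.zero_of_eval_zero _ h1
  have h4 := congrArg (fun r => Polynomial.coeff r j) h3
  simpa [coeff_polyMapCoeff] using h4

noncomputable def coePolyL : Polynomial B →ₗ[ℚ] PowerSeries B where
  toFun x := Polynomial.coeToPowerSeries.ringHom x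
  map_add' x y := map_add _ x y
  map_smul' c x := ratSmul_ringHom _ c x

noncomputable def aevalL (t : ℚ) : Polynomial B →ₗ[ℚ] B where
  toFun x := Polynomial.aeval (algebraMap ℚ B t) x
  map_add' x y := map_add _ x y
  map_smul' c x := ratSmul_ringHom
    (Polynomial.aeval (algebraMap ℚ B t) : Polynomial B →ₐ[B] B).toRingHom c x

set_option maxHeartbeats 1000000 in
theorem coePolyL_apply (x : Polynomial B) :
    coePolyL x = Polynomial.coeToPowerSeries.ringHom x := rfl

theorem psi_coe_vanish (f : B →ₗ[ℚ] C) {n : ℕ}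
    (hf2 : ∀ k, n + 1 ≤ k → ∀ x : B, psi f x k = 0)
    (p : Polynomial B) (k : ℕ) (hk : n + 1 ≤ k) :
    psi (mapCoeffL f) (Polynomial.coeToPowerSeries.ringHom p) k = 0 := by
  classical
  have e1 : psi ((mapCoeffL f).comp coePolyL) p k
      = psi (mapCoeffL f) (Polynomial.coeToPowerSeries.ringHom p) k := by
    apply psi_comp_ringHom (A := Polynomial B) (B := PowerSeries B) (C := PowerSeries C)
      Polynomial.coeToPowerSeries.ringHom (ratSmul_ringHom _) (mapCoeffL f)
    intro x
    rfl
  have e2 : psi ((mapCoeffL f).comp coePolyL) p k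
      = Polynomial.coeToPowerSeries.ringHom (psi (polyMapCoeff f) p k) := by
    apply psi_ringHom_comp (A := Polynomial B) (B := Polynomial C) (C := PowerSeries C)
      Polynomial.coeToPowerSeries.ringHom (ratSmul_ringHom _) (polyMapCoeff f)
    intro x
    ext j
    rw [LinearMap.comp_apply, coePolyL_apply, mapCoeffL_apply, coeff_mapCoeff]
    rw [Polynomial.coeToPowerSeries.ringHom_apply, Polynomial.coeff_coe,
      Polynomial.coeToPowerSeries.ringHom_apply, Polynomial.coeff_coe, coeff_polyMapCoeff]
  have e3 : psi (polyMapCoeff f) p k = 0 := by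
    apply poly_zero_of_aeval_rat_zero
    intro t
    have e4 : psi (f.comp (aevalL t)) p k =
        (Polynomial.aeval (algebraMap ℚ C t) : Polynomial C →ₐ[C] C).toRingHom
          (psi (polyMapCoeff f) p k) := by
      apply psi_ringHom_comp (A := Polynomial B) (B := Polynomial C) (C := C)
        (Polynomial.aeval (algebraMap ℚ C t) : Polynomial C →ₐ[C] C).toRingHom
        (ratSmul_ringHom _) (polyMapCoeff f)
      intro x
      exact (aeval_polyMapCoeff f x t).symm
    have e5 : psi (f.comp (aevalL t)) p k
        = psi f (Polynomial.aeval (algebraMap ℚ B t) p) k := by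
      apply psi_comp_ringHom (A := Polynomial B) (B := B) (C := C)
        ((Polynomial.aeval (algebraMap ℚ B t) : Polynomial B →ₐ[B] B)).toRingHom
        (ratSmul_ringHom _) f
      intro x
      rfl
    have e6 : (Polynomial.aeval (algebraMap ℚ C t) : Polynomial C →ₐ[C] C).toRingHom
        (psi (polyMapCoeff f) p k) = 0 := by
      rw [← e4, e5, hf2 k hk]
    exact e6
  rw [← e1, e2, e3, map_zero]

end Aux

set_option maxHeartbeats 1000000 in
/-- the composition of an `m`-homomorphism `g : A → B` with an
`n`-homomorphism `f : B → C` is an `nm`-homomorphism. -/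
theorem stmt12 {A B C : Type*} [CommRing A] [CommRing B] [CommRing C]
    [Algebra ℚ A] [Algebra ℚ B] [Algebra ℚ C]
    (g : A →ₗ[ℚ] B) (f : B →ₗ[ℚ] C) (m n : ℕ)
    (hg : IsNHom g m) (hf : IsNHom f n) :
    IsNHom (f ∘ₗ g) (n * m) := by
  obtain ⟨hg1, hg2⟩ := hg
  obtain ⟨hf1, hf2⟩ := hf
  constructor
  · rw [LinearMap.comp_apply, hg1, map_nsmul, hf1, smul_smul, Nat.mul_comm]
  · intro k hk a
    set L := mapCoeff g (logOneAdd a) with hLdef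
    have hL0 : PowerSeries.coeff 0 L = 0 := by
      rw [hLdef, coeff_mapCoeff, logOneAdd, PowerSeries.coeff_mk]
      norm_num
    have hcomp : psi (f ∘ₗ g) a k = PowerSeries.coeff k (expPS (mapCoeff f L)) := by
      have : mapCoeff (f ∘ₗ g) (logOneAdd a) = mapCoeff f L := by
        ext j
        rw [coeff_mapCoeff, coeff_mapCoeff, hLdef, coeff_mapCoeff, LinearMap.comp_apply]
      rw [psi, charFun, this]
    set b := expPS L - 1 with hbdef
    have hb0 : PowerSeries.coeff 0 b = 0 := by
      rw [hbdef, map_sub, coeff_zero_expPS, PowerSeries.coeff_zero_one, sub_self]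
    have hbcoe : ∀ i, 1 ≤ i → PowerSeries.coeff i b = psi g a i := by
      intro i hi
      rw [hbdef, map_sub, PowerSeries.coeff_one, if_neg (by omega), sub_zero]
      rfl
    have hbdeg : ∀ i, m < i → PowerSeries.coeff i b = 0 := by
      intro i hi
      rw [hbcoe i (by omega)]
      exact hg2 i (by omega) a
    have hLlog : L = logPS b := (logPS_expPS hL0).symm
    rw [hcomp, hLlog, gather f hb0 k]
    apply Finset.sum_eq_zero
    intro k' _
    by_cases hc : k' ≤ n
    · exact psi_deg_bound f hbdeg k' k (by calc k' * m ≤ n * m := Nat.mul_le_mul_right m hc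
        _ < k := by omega)
    · set p : Polynomial B := ∑ i ∈ Finset.range (m + 1),
        Polynomial.monomial i (PowerSeries.coeff i b) with hpdef
      have hp : Polynomial.coeToPowerSeries.ringHom p = b := by
        ext j
        rw [Polynomial.coeToPowerSeries.ringHom_apply, Polynomial.coeff_coe, hpdef,
          Polynomial.finset_sum_coeff]
        have : ∀ i ∈ Finset.range (m + 1), (Polynomial.monomial i
            (PowerSeries.coeff i b)).coeff j = if j = i then PowerSeries.coeff j b else 0 := by
          intro i _
          rw [Polynomial.coeff_monomial]
          rcases eq_or_ne i j with h | h
          · subst h; simp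
          · rw [if_neg h, if_neg (Ne.symm h)]
        rw [Finset.sum_congr rfl this, Finset.sum_ite_eq (Finset.range (m + 1)) j
          (fun _ => PowerSeries.coeff j b)]
        split_ifs with h
        · rfl
        · rw [Finset.mem_range] at h
          rw [hbdeg j (by omega)]
      rw [← hp, psi_coe_vanish f hf2 p k' (by omega), map_zero]
end

section
/- Let T^n(A) := A ⊗_ℚ ⋯ ⊗_ℚ A (n factors) with its commutative ℚ-algebra structure, let F : T^n(A) → B be a ℚ-algebra homomorphism, and let f_F : A → B be the ℚ-linear map f_F(a) = Σ_{i ∈ Fin n} F(ι_i(a)), where ι_i(a) is the pure tensor with a in slot i and 1 elsewhere. Then for every a ∈ A, ψ_n(f_F, a) = F(a ⊗ a ⊗ ⋯ ⊗ a). (This expresses that the algebra homomorphism reconstructed from the n-homomorphism f_F agrees with F on diagonal tensors, hence on their span.) -/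
open PowerSeries

open scoped TensorProduct

/-- The pure tensor with `a` in slot `i` and `1` in all other slots, as a linear map. -/
noncomputable def iota {A : Type*} [CommRing A] [Algebra ℚ A] (n : ℕ) (i : Fin n) :
    A →ₗ[ℚ] (⨂[ℚ] (_ : Fin n), A) :=
  (PiTensorProduct.tprod ℚ (s := fun _ : Fin n => A)).toLinearMap (fun _ => 1) i

/-- The linear map `f_F(a) = Σ_i F(ι_i(a))` associated to an algebra
homomorphism `F : T^n(A) → B`. -/
noncomputable def fF {A B : Type*} [CommRing A] [CommRing B] [Algebra ℚ A] [Algebra ℚ B]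
    (n : ℕ) (F : (⨂[ℚ] (_ : Fin n), A) →ₐ[ℚ] B) : A →ₗ[ℚ] B :=
  ∑ i : Fin n, F.toLinearMap ∘ₗ iota n i

section Aux
set_option linter.unusedSectionVars false
variable {R : Type*} [CommRing R] [Algebra ℚ R]

lemma coeff_smul_rat (q : ℚ) (p : R⟦X⟧) (k : ℕ) : coeff k (q • p) = q • coeff k p := rfl

lemma coeff_pow_zero {p : R⟦X⟧} (hp : constantCoeff p = 0) {k m : ℕ} (h : k < m) :
    coeff k (p ^ m) = 0 :=
  (X_pow_dvd_iff.mp (pow_dvd_pow_of_dvd (X_dvd_iff.mpr hp) m)) k h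

noncomputable def partialExp (p : R⟦X⟧) (M : ℕ) : R⟦X⟧ :=
  ∑ m ∈ Finset.range (M + 1), ((m.factorial : ℚ)⁻¹) • p ^ m

lemma coeff_expPS_s17 {p : R⟦X⟧} (hp : constantCoeff p = 0) {k M : ℕ} (h : k ≤ M) :
    coeff k (expPS p) = coeff k (partialExp p M) := by
  have : coeff k (partialExp p M) =
      ∑ m ∈ Finset.range (M + 1), ((m.factorial : ℚ)⁻¹) • coeff k (p ^ m) := by
    rw [partialExp, map_sum]
    exact Finset.sum_congr rfl fun m _ => coeff_smul_rat _ _ _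
  rw [this, expPS, coeff_mk]
  refine Finset.sum_subset (Finset.range_subset_range.mpr (by omega)) ?_
  intro m hm hm'
  simp only [Finset.mem_range] at hm hm'
  rw [coeff_pow_zero hp (by omega), smul_zero]

lemma deriv_smul_rat (q : ℚ) (p : R⟦X⟧) : d⁄dX R (q • p) = q • d⁄dX R p := by
  ext n
  rw [coeff_derivative, coeff_smul_rat, coeff_smul_rat, coeff_derivative, smul_mul_assoc]

lemma deriv_partialExp (p : R⟦X⟧) (M : ℕ) :
    d⁄dX R (partialExp p (M + 1)) = d⁄dX R p * partialExp p M := by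
  rw [partialExp, map_sum, Finset.sum_range_succ']
  have h0 : d⁄dX R (((Nat.factorial 0 : ℚ))⁻¹ • p ^ 0) = 0 := by
    simp [deriv_smul_rat]
  rw [h0, add_zero, partialExp, Finset.mul_sum]
  refine Finset.sum_congr rfl fun m _ => ?_
  rw [deriv_smul_rat, Derivation.leibniz_pow, Nat.succ_sub_one, smul_eq_mul,
    ← Nat.cast_smul_eq_nsmul ℚ, smul_smul, mul_comm (d⁄dX R p), ← smul_mul_assoc]
  congr 2
  rw [Nat.factorial_succ]
  push_cast
  rw [mul_inv]
  field_simp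

lemma constantCoeff_expPS (p : R⟦X⟧) : constantCoeff (expPS p) = 1 := by
  rw [← coeff_zero_eq_constantCoeff_apply, expPS, coeff_mk]
  simp

lemma deriv_expPS_s17 {p : R⟦X⟧} (hp : constantCoeff p = 0) :
    d⁄dX R (expPS p) = d⁄dX R p * expPS p := by
  ext n
  rw [coeff_derivative, coeff_expPS_s17 hp (le_refl (n+1)), ← coeff_derivative,
    deriv_partialExp, coeff_mul, coeff_mul]
  refine Finset.sum_congr rfl fun x hx => ?_
  rw [Finset.HasAntidiagonal.mem_antidiagonal] at hx
  rw [coeff_expPS_s17 hp (show x.2 ≤ n by omega)]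

lemma ode_unique {g z : R⟦X⟧} (h : d⁄dX R z = g * z) (h0 : coeff 0 z = 0) : z = 0 := by
  ext n
  induction n using Nat.strong_induction_on with
  | _ n ih =>
    match n with
    | 0 => simpa using h0
    | n + 1 =>
      have hd : coeff n (d⁄dX R z) = coeff n (g * z) := by rw [h]
      rw [coeff_derivative, coeff_mul] at hd
      have hs : ∑ x ∈ Finset.HasAntidiagonal.antidiagonal n, coeff x.1 g * coeff x.2 z = 0 := by
        refine Finset.sum_eq_zero fun x hx => ?_
        rw [Finset.HasAntidiagonal.mem_antidiagonal] at hx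
        rw [ih x.2 (by omega), map_zero, mul_zero]
      rw [hs] at hd
      have hq : ((n : ℚ) + 1) • coeff (n + 1) z = 0 := by
        have e : ((n : ℚ) + 1) • coeff (n + 1) z = coeff (n + 1) z * ((n : R) + 1) := by
          rw [show ((n : ℚ) + 1) = ((n + 1 : ℕ) : ℚ) by push_cast; ring,
            Nat.cast_smul_eq_nsmul, nsmul_eq_mul, mul_comm]
          push_cast; ring
        rw [e, hd]
      have hne : ((n : ℚ) + 1) ≠ 0 := by positivity
      have := congrArg (fun x => ((n : ℚ) + 1)⁻¹ • x) hq
      simpa [smul_smul, inv_mul_cancel₀ hne] using this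

lemma expPS_add {p q : R⟦X⟧} (hp : constantCoeff p = 0) (hq : constantCoeff q = 0) :
    expPS (p + q) = expPS p * expPS q := by
  have key : d⁄dX R (expPS (p+q) - expPS p * expPS q)
      = d⁄dX R (p + q) * (expPS (p+q) - expPS p * expPS q) := by
    rw [map_sub, Derivation.leibniz, smul_eq_mul, smul_eq_mul,
      deriv_expPS_s17 (by rw [map_add, hp, hq, add_zero]), deriv_expPS_s17 hp, deriv_expPS_s17 hq,
      map_add]
    ring
  have h0 : coeff 0 (expPS (p+q) - expPS p * expPS q) = 0 := by
    rw [map_sub, coeff_zero_eq_constantCoeff_apply, coeff_zero_eq_constantCoeff_apply,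
      map_mul, constantCoeff_expPS, constantCoeff_expPS, constantCoeff_expPS]
    ring
  have := ode_unique key h0
  linear_combination (norm := ring_nf) this

lemma constantCoeff_logOneAdd (a : R) : constantCoeff (logOneAdd a) = 0 := by
  rw [← coeff_zero_eq_constantCoeff_apply, logOneAdd, coeff_mk]
  norm_num

lemma coeff_deriv_log (a : R) (n : ℕ) :
    coeff n (d⁄dX R (logOneAdd a)) = ((-1 : ℚ) ^ n) • a ^ (n + 1) := by
  have hmul : a ^ (n + 1) * ((n : R) + 1) = ((n + 1 : ℕ) : ℚ) • a ^ (n + 1) := by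
    rw [Nat.cast_smul_eq_nsmul, nsmul_eq_mul]; push_cast; ring
  rw [coeff_derivative, logOneAdd, coeff_mk, smul_mul_assoc, hmul, smul_smul]
  congr 1
  have hne : ((n : ℚ) + 1) ≠ 0 := by positivity
  push_cast
  field_simp
  ring

lemma expPS_zero : expPS (0 : R⟦X⟧) = 1 := by
  ext k
  rw [expPS, coeff_mk]
  rw [Finset.sum_eq_single 0]
  · simp
  · intro m _ hm
    rw [zero_pow hm, map_zero, smul_zero]
  · simp

lemma expPS_log (a : R) : expPS (logOneAdd a) = 1 + C a * X := by
  set g := d⁄dX R (logOneAdd a) with hg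
  have hc : constantCoeff (logOneAdd a) = 0 := constantCoeff_logOneAdd a
  have hB : g * (1 + C a * X) = C a := by
    have hre : g * (1 + C a * X) = g + C a * (g * X) := by ring
    rw [hre]
    ext n
    rw [map_add, coeff_C_mul, coeff_C]
    rcases n with _ | n
    · rw [coeff_zero_mul_X, mul_zero, add_zero, coeff_deriv_log]
      norm_num
    · rw [coeff_succ_mul_X, coeff_deriv_log, coeff_deriv_log, mul_smul_comm, if_neg (by omega)]
      have h1 : a * a ^ (n + 1) = a ^ (n + 1 + 1) := by ring
      rw [h1, ← add_smul]
      norm_num [pow_succ]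
  have hA : d⁄dX R (1 + C a * X) = C a := by
    rw [map_add, Derivation.map_one_eq_zero, zero_add, Derivation.leibniz, derivative_X,
      derivative_C, smul_zero, add_zero, smul_eq_mul, mul_one]
  have key : d⁄dX R (expPS (logOneAdd a) - (1 + C a * X))
      = g * (expPS (logOneAdd a) - (1 + C a * X)) := by
    rw [map_sub, deriv_expPS_s17 hc, ← hg, hA, mul_sub, hB]
  have h0 : coeff 0 (expPS (logOneAdd a) - (1 + C a * X)) = 0 := by
    rw [map_sub, coeff_zero_eq_constantCoeff_apply, coeff_zero_eq_constantCoeff_apply,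
      constantCoeff_expPS]
    simp
  have := ode_unique key h0
  linear_combination (norm := ring_nf) this

lemma expPS_sum {ι : Type*} (s : Finset ι) (p : ι → R⟦X⟧)
    (h : ∀ i ∈ s, constantCoeff (p i) = 0) :
    expPS (∑ i ∈ s, p i) = ∏ i ∈ s, expPS (p i) := by
  induction s using Finset.cons_induction with
  | empty => simp [expPS_zero]
  | cons a s ha ih =>
    rw [Finset.sum_cons, Finset.prod_cons,
      expPS_add (h a (Finset.mem_cons_self a s))
        (by rw [map_sum]; exact Finset.sum_eq_zero fun i hi => h i (Finset.mem_cons_of_mem hi)),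
      ih fun i hi => h i (Finset.mem_cons_of_mem hi)]

lemma coeff_prod_linear {ι : Type*} (s : Finset ι) (b : ι → R) :
    (∀ k, s.card < k → coeff k (∏ i ∈ s, (1 + C (b i) * X)) = 0) ∧
      coeff s.card (∏ i ∈ s, (1 + C (b i) * X)) = ∏ i ∈ s, b i := by
  induction s using Finset.cons_induction with
  | empty => simp [coeff_one]; intro k hk; omega
  | cons a s ha ih =>
    have hexp : ∀ k, coeff (k + 1) (∏ i ∈ Finset.cons a s ha, (1 + C (b i) * X))
        = coeff (k + 1) (∏ i ∈ s, (1 + C (b i) * X))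
          + b a * coeff k (∏ i ∈ s, (1 + C (b i) * X)) := by
      intro k
      rw [Finset.prod_cons]
      have : (1 + C (b a) * X) * (∏ i ∈ s, (1 + C (b i) * X))
          = (∏ i ∈ s, (1 + C (b i) * X))
            + C (b a) * ((∏ i ∈ s, (1 + C (b i) * X)) * X) := by ring
      rw [this, map_add, coeff_C_mul, coeff_succ_mul_X]
    constructor
    · intro k hk
      rw [Finset.card_cons] at hk
      obtain ⟨k, rfl⟩ : ∃ m, k = m + 1 := ⟨k - 1, by omega⟩
      rw [hexp, ih.1 _ (by omega), ih.1 _ (by omega), mul_zero, add_zero]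
    · rw [Finset.card_cons, hexp, ih.1 _ (by omega), ih.2, Finset.prod_cons, zero_add]

lemma expPS_map {S : Type*} [CommRing S] [Algebra ℚ S] (F : R →ₐ[ℚ] S) (p : R⟦X⟧) :
    expPS (PowerSeries.map (F : R →+* S) p) = PowerSeries.map (F : R →+* S) (expPS p) := by
  ext k
  rw [coeff_map, expPS, expPS, coeff_mk, coeff_mk, map_sum]
  refine Finset.sum_congr rfl fun m _ => ?_
  rw [← map_pow, coeff_map, map_rat_smul]

end Aux

/-- for a ℚ-algebra homomorphism `F : T^n(A) → B` and the associated
`n`-homomorphism `f_F`, one has `ψ_n(f_F, a) = F(a ⊗ ⋯ ⊗ a)` for every `a`. -/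
theorem stmt17 {A B : Type*} [CommRing A] [CommRing B] [Algebra ℚ A] [Algebra ℚ B]
    (n : ℕ) (F : (⨂[ℚ] (_ : Fin n), A) →ₐ[ℚ] B) (a : A) :
    psi (fF n F) a n = F (PiTensorProduct.tprod ℚ (fun _ : Fin n => a)) := by
  classical
  set b : Fin n → (⨂[ℚ] (_ : Fin n), A) := fun i => iota n i a with hb
  have hiota : ∀ (i : Fin n) (x : A),
      iota n i x = PiTensorProduct.tprod ℚ (Function.update (fun _ : Fin n => (1 : A)) i x) :=
    fun i x => rfl
  have hpow : ∀ (i : Fin n) (k : ℕ), iota n i (a ^ k) = (b i) ^ k := by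
    intro i k
    simp only [hb, hiota]
    have h1 : Function.update (fun _ : Fin n => (1 : A)) i (a ^ k)
        = (Function.update (fun _ : Fin n => (1 : A)) i a) ^ k := by
      funext j
      by_cases hj : j = i
      · subst hj; simp [Function.update_self]
      · simp [Function.update_of_ne hj]
    rw [h1]
    exact map_pow (PiTensorProduct.tprodMonoidHom ℚ (A := fun _ : Fin n => A))
      (Function.update (fun _ : Fin n => (1 : A)) i a) k
  have hlog : mapCoeff (fF n F) (logOneAdd a)
      = PowerSeries.map (F : (⨂[ℚ] (_ : Fin n), A) →+* B) (∑ i : Fin n, logOneAdd (b i)) := by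
    ext k
    rw [mapCoeff, coeff_mk, PowerSeries.coeff_map, map_sum, logOneAdd, coeff_mk, fF,
      LinearMap.sum_apply, map_sum]
    refine Finset.sum_congr rfl fun i _ => ?_
    simp only [LinearMap.comp_apply, map_smul, hpow, AlgHom.toLinearMap_apply, logOneAdd,
      coeff_mk, map_rat_smul, map_pow]
    rfl
  have hcc : ∀ i ∈ Finset.univ (α := Fin n), constantCoeff (logOneAdd (b i)) = 0 :=
    fun i _ => constantCoeff_logOneAdd (b i)
  rw [psi, charFun, hlog, expPS_map, PowerSeries.coeff_map, expPS_sum _ _ hcc]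
  have hprod : (coeff n) (∏ i : Fin n, expPS (logOneAdd (b i)))
      = ∏ i : Fin n, b i := by
    have heq : ∀ i : Fin n, expPS (logOneAdd (b i)) = 1 + C (b i) * X :=
      fun i => expPS_log (b i)
    rw [Finset.prod_congr rfl fun i _ => heq i]
    have := (coeff_prod_linear (Finset.univ : Finset (Fin n)) b).2
    rwa [Finset.card_univ, Fintype.card_fin] at this
  have hdiag : ∏ i : Fin n, b i = PiTensorProduct.tprod ℚ (fun _ : Fin n => a) := by
    have h1 : ∏ i : Fin n, b i
        = PiTensorProduct.tprodMonoidHom ℚ (A := fun _ : Fin n => A)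
            (∏ i : Fin n, Function.update (fun _ : Fin n => (1 : A)) i a) := by
      rw [map_prod]; rfl
    rw [h1]
    show PiTensorProduct.tprod ℚ _ = _
    congr 1
    funext j
    rw [Finset.prod_apply,
      Finset.prod_eq_single j
        (fun i _ hij => Function.update_of_ne (Ne.symm hij) a (fun _ : Fin n => (1 : A)))
        (fun h => absurd (Finset.mem_univ j) h), Function.update_self]
  rw [hprod, hdiag]
  rfl
end
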